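/- For α > 0, the function u(r) = 8/(1 + α r²) on ℝ⁴ (i.e., u(x) = 8/(1+α|x|²) for x ∈ ℝ⁴) satisfies Δ²u = S₂[u] pointwise, where Δ² is the bilaplacian in ℝ⁴ and S₂[u] is the second elementary symmetric polynomial of the eigenvalues of the Hessian matrix D²u; moreover u(x) → 0 as |x| → ∞. -/

import Mathlib

open Real Filter

/-- The Hessian matrix of `u : ℝ⁴ → ℝ` at `x`, via iterated Fréchet derivatives. -/
noncomputable def hess (u : EuclideanSpace ℝ (Fin 4) → ℝ) (x : EuclideanSpace ℝ (Fin 4)) :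
    Matrix (Fin 4) (Fin 4) ℝ :=
  fun i j => iteratedFDeriv ℝ 2 u x ![EuclideanSpace.single i (1:ℝ), EuclideanSpace.single j 1]

/-- The Laplacian of `u : ℝ⁴ → ℝ`, the trace of the Hessian. -/
noncomputable def lap (u : EuclideanSpace ℝ (Fin 4) → ℝ) (x : EuclideanSpace ℝ (Fin 4)) : ℝ :=
  (hess u x).trace

/-- The `2`-Hessian `S₂[u]`, the second elementary symmetric function of the eigenvalues
of the Hessian: `S₂[u] = ½((tr D²u)² - tr((D²u)²))`. -/
noncomputable def S2 (u : EuclideanSpace ℝ (Fin 4) → ℝ) (x : EuclideanSpace ℝ (Fin 4)) : ℝ :=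
  ((hess u x).trace^2 - (hess u x * hess u x).trace) / 2

abbrev E4 := EuclideanSpace ℝ (Fin 4)

lemma hasFDerivAt_radial (g g₁ : ℝ → ℝ) (h1 : ∀ s : ℝ, 0 ≤ s → HasDerivAt g (g₁ s) s)
    (x : E4) :
    HasFDerivAt (fun y : E4 => g (‖y‖^2)) ((2 * g₁ (‖x‖^2)) • innerSL ℝ x) x := by
  have hq : HasFDerivAt (fun y : E4 => ‖y‖^2) (2 • innerSL ℝ x) x :=
    (hasStrictFDerivAt_norm_sq x).hasFDerivAt
  have h := (h1 (‖x‖^2) (by positivity)).comp_hasFDerivAt x hq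
  refine h.congr_fderiv ?_
  ext y
  simp [smul_smul]
  ring

lemma hess_radial (g g₁ g₂ : ℝ → ℝ)
    (h1 : ∀ s : ℝ, 0 ≤ s → HasDerivAt g (g₁ s) s)
    (h2 : ∀ s : ℝ, 0 ≤ s → HasDerivAt g₁ (g₂ s) s)
    (x : E4) (i j : Fin 4) :
    hess (fun y => g (‖y‖^2)) x i j
      = 4 * g₂ (‖x‖^2) * x i * x j + 2 * g₁ (‖x‖^2) * (if i = j then 1 else 0) := by
  have hfd : fderiv ℝ (fun y : E4 => g (‖y‖^2)) = fun y => (2 * g₁ (‖y‖^2)) • innerSL ℝ y :=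
    funext fun y => (hasFDerivAt_radial g g₁ h1 y).fderiv
  have hc : HasFDerivAt (fun y : E4 => 2 * g₁ (‖y‖^2))
      ((2 * (2 * g₂ (‖x‖^2))) • innerSL ℝ x) x :=
    hasFDerivAt_radial (fun s => 2 * g₁ s) (fun s => 2 * g₂ s)
      (fun s hs => (h2 s hs).const_mul 2) x
  have hf : HasFDerivAt (fun y : E4 => innerSL ℝ y) (innerSL ℝ (E := E4)) x :=
    (innerSL ℝ (E := E4)).hasFDerivAt
  have H := hc.smul hf
  have H' : fderiv ℝ (fun y : E4 => (2 * g₁ (‖y‖^2)) • innerSL ℝ y) x = _ := H.fderiv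
  rw [hess, iteratedFDeriv_two_apply, hfd, H']
  simp only [Matrix.cons_val_zero, Matrix.cons_val_one, Matrix.head_cons,
    ContinuousLinearMap.add_apply, ContinuousLinearMap.smul_apply,
    ContinuousLinearMap.smulRight_apply, innerSL_apply_apply, smul_eq_mul,
    EuclideanSpace.inner_single_right, EuclideanSpace.inner_single_left,
    EuclideanSpace.single_apply, starRingEnd_apply, star_trivial, one_mul, mul_one]
  erw [innerSL_apply_apply, EuclideanSpace.inner_single_left]
  simp only [EuclideanSpace.single_apply, starRingEnd_apply, star_trivial, one_mul, mul_one]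
  rcases eq_or_ne i j with h | h
  · simp [h]; ring
  · simp only [if_neg h, if_neg (Ne.symm h), zero_add, add_zero]; ring

lemma norm_sq_eq4 (x : E4) : (x 0)^2 + (x 1)^2 + (x 2)^2 + (x 3)^2 = ‖x‖^2 := by
  rw [EuclideanSpace.norm_eq, Real.sq_sqrt (by positivity)]
  simp [Fin.sum_univ_four, Real.norm_eq_abs, sq_abs]

lemma lap_radial (g g₁ g₂ : ℝ → ℝ)
    (h1 : ∀ s : ℝ, 0 ≤ s → HasDerivAt g (g₁ s) s)
    (h2 : ∀ s : ℝ, 0 ≤ s → HasDerivAt g₁ (g₂ s) s)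
    (x : E4) :
    lap (fun y => g (‖y‖^2)) x = 4 * g₂ (‖x‖^2) * ‖x‖^2 + 8 * g₁ (‖x‖^2) := by
  have hP := norm_sq_eq4 x
  simp only [lap, Matrix.trace, Matrix.diag, Fin.sum_univ_four,
    hess_radial g g₁ g₂ h1 h2 x]
  norm_num [Fin.reduceEq]
  rw [← hP]; ring

lemma S2_radial (g g₁ g₂ : ℝ → ℝ)
    (h1 : ∀ s : ℝ, 0 ≤ s → HasDerivAt g (g₁ s) s)
    (h2 : ∀ s : ℝ, 0 ≤ s → HasDerivAt g₁ (g₂ s) s)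
    (x : E4) :
    S2 (fun y => g (‖y‖^2)) x
      = 24 * g₁ (‖x‖^2) * g₂ (‖x‖^2) * ‖x‖^2 + 24 * (g₁ (‖x‖^2))^2 := by
  have hP := norm_sq_eq4 x
  simp only [S2, Matrix.trace, Matrix.diag, Matrix.mul_apply, Fin.sum_univ_four,
    hess_radial g g₁ g₂ h1 h2 x, Fin.reduceEq, if_false, if_true, zero_mul, mul_zero,
    add_zero, zero_add, sub_zero, neg_zero]
  rw [← hP]; ring

lemma bilap_radial (g g1 g2 g3 g4 : ℝ → ℝ)
    (h1 : ∀ s : ℝ, 0 ≤ s → HasDerivAt g (g1 s) s)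
    (h2 : ∀ s : ℝ, 0 ≤ s → HasDerivAt g1 (g2 s) s)
    (h3 : ∀ s : ℝ, 0 ≤ s → HasDerivAt g2 (g3 s) s)
    (h4 : ∀ s : ℝ, 0 ≤ s → HasDerivAt g3 (g4 s) s)
    (x : E4) :
    lap (lap (fun y => g (‖y‖^2))) x
      = 16 * g4 (‖x‖^2) * (‖x‖^2)^2 + 96 * g3 (‖x‖^2) * ‖x‖^2 + 96 * g2 (‖x‖^2) := by
  have hlap : lap (fun y => g (‖y‖^2)) = fun y => 4 * g2 (‖y‖^2) * ‖y‖^2 + 8 * g1 (‖y‖^2) :=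
    funext (lap_radial g g1 g2 h1 h2)
  rw [hlap]
  have hG1 : ∀ s : ℝ, 0 ≤ s → HasDerivAt (fun t => 4 * g2 t * t + 8 * g1 t)
      ((fun s => 4 * g3 s * s + 4 * g2 s * 1 + 8 * g2 s) s) s := fun s hs =>
    (((h3 s hs).const_mul 4).mul (hasDerivAt_id s)).add ((h2 s hs).const_mul 8)
  have hG2 : ∀ s : ℝ, 0 ≤ s → HasDerivAt (fun t => 4 * g3 t * t + 4 * g2 t * 1 + 8 * g2 t)
      ((fun s => 4 * g4 s * s + 4 * g3 s * 1 + (4 * g3 s * 1 + 4 * g2 s * 0) + 8 * g3 s) s) s :=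
    fun s hs =>
    ((((h4 s hs).const_mul 4).mul (hasDerivAt_id s)).add
      (((h3 s hs).const_mul 4).mul (hasDerivAt_const s 1))).add ((h3 s hs).const_mul 8)
  have e := lap_radial _ _ _ hG1 hG2 x
  rw [e]
  ring

lemma hasDerivAt_aux (α c v : ℝ) (n : ℕ) (s : ℝ) (h : 1 + α * s ≠ 0)
    (hv : v * (1 + α * s)^(n+2) = -(c * ((n : ℝ) + 1) * α)) :
    HasDerivAt (fun t : ℝ => c / (1 + α * t)^(n+1)) v s := by
  have hb : HasDerivAt (fun t : ℝ => 1 + α * t) α s := by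
    simpa using ((hasDerivAt_id s).const_mul α).const_add 1
  have hp : HasDerivAt (fun t : ℝ => (1 + α * t)^(n+1))
      ((↑(n+1) : ℝ) * (1 + α * s)^(n+1-1) * α) s := hb.pow (n+1)
  have hinv := (hp.inv (pow_ne_zero _ h)).const_mul c
  have hfun : (fun t : ℝ => c * ((1 + α * t)^(n+1))⁻¹)
      = fun t : ℝ => c / (1 + α * t)^(n+1) := by
    funext t; rw [div_eq_mul_inv]
  simp only [Pi.inv_apply] at hinv
  rw [hfun] at hinv
  have hval : v = c * (-((↑(n+1) : ℝ) * (1 + α * s)^(n+1-1) * α) / ((1 + α * s)^(n+1))^2) := by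
    have hne2 : ((1 + α * s)^(n+1))^2 ≠ 0 := pow_ne_zero _ (pow_ne_zero _ h)
    rw [← mul_div_assoc, eq_div_iff hne2]
    have : ((1 + α * s)^(n+1))^2 = (1 + α * s)^(n+2) * (1 + α * s)^n := by ring
    rw [this, ← mul_assoc, hv]
    simp only [Nat.add_sub_cancel, Nat.cast_add, Nat.cast_one]
    ring
  rw [hval]
  exact hinv

/-- For `α > 0`, the function `u(x) = 8/(1 + α|x|²)` on `ℝ⁴` satisfies
`Δ²u = S₂[u]` pointwise and tends to `0` as `|x| → ∞`. -/
theorem stmt11 (α : ℝ) (hα : 0 < α)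
    (u : EuclideanSpace ℝ (Fin 4) → ℝ) (hu : u = fun x => 8 / (1 + α * ‖x‖^2)) :
    (∀ x : EuclideanSpace ℝ (Fin 4), lap (lap u) x = S2 u x) ∧
    Tendsto u (Filter.cocompact (EuclideanSpace ℝ (Fin 4))) (nhds 0) := by
  subst hu
  have hne : ∀ s : ℝ, 0 ≤ s → (1 : ℝ) + α * s ≠ 0 := fun s hs => by positivity
  constructor
  · intro x
    have hd01 : ∀ s : ℝ, 0 ≤ s →
        HasDerivAt (fun t : ℝ => 8 / (1 + α * t)) (-(8*α)/(1+α*s)^2) s := by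
      intro s hs
      have h := hasDerivAt_aux α 8 (-(8*α)/(1+α*s)^2) 0 s (hne s hs)
        (by push_cast; field_simp; ring)
      simpa only [zero_add, pow_one] using h
    have hd12 : ∀ s : ℝ, 0 ≤ s →
        HasDerivAt (fun t : ℝ => -(8*α)/(1+α*t)^2) (16*α^2/(1+α*s)^3) s := by
      intro s hs
      exact hasDerivAt_aux α (-(8*α)) (16*α^2/(1+α*s)^3) 1 s (hne s hs)
        (by push_cast; field_simp; ring)
    have hd23 : ∀ s : ℝ, 0 ≤ s →
        HasDerivAt (fun t : ℝ => 16*α^2/(1+α*t)^3) (-(48*α^3)/(1+α*s)^4) s := by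
      intro s hs
      exact hasDerivAt_aux α (16*α^2) (-(48*α^3)/(1+α*s)^4) 2 s (hne s hs)
        (by push_cast; field_simp; ring)
    have hd34 : ∀ s : ℝ, 0 ≤ s →
        HasDerivAt (fun t : ℝ => -(48*α^3)/(1+α*t)^4) (192*α^4/(1+α*s)^5) s := by
      intro s hs
      exact hasDerivAt_aux α (-(48*α^3)) (192*α^4/(1+α*s)^5) 3 s (hne s hs)
        (by push_cast; field_simp; ring)
    have e1 := bilap_radial (fun t : ℝ => 8/(1+α*t)) (fun s : ℝ => -(8*α)/(1+α*s)^2)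
      (fun s : ℝ => 16*α^2/(1+α*s)^3) (fun s : ℝ => -(48*α^3)/(1+α*s)^4)
      (fun s : ℝ => 192*α^4/(1+α*s)^5) hd01 hd12 hd23 hd34 x
    have e2 := S2_radial (fun t : ℝ => 8/(1+α*t)) (fun s : ℝ => -(8*α)/(1+α*s)^2)
      (fun s : ℝ => 16*α^2/(1+α*s)^3) hd01 hd12 x
    rw [(e1 : lap (lap (fun x : E4 => 8/(1+α*‖x‖^2))) x = _),
      (e2 : S2 (fun x : E4 => 8/(1+α*‖x‖^2)) x = _)]
    have hS : (0:ℝ) ≤ ‖x‖^2 := by positivity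
    have hne' := hne _ hS
    field_simp
    ring
  · have h1 : Tendsto (fun r : ℝ => 1 + α * r^2) atTop atTop :=
      tendsto_atTop_add_const_left _ 1
        ((tendsto_pow_atTop (by norm_num : (2:ℕ) ≠ 0)).const_mul_atTop hα)
    have h2 : Tendsto (fun r : ℝ => 8 / (1 + α * r^2)) atTop (nhds 0) :=
      tendsto_const_nhds.div_atTop h1
    exact h2.comp tendsto_norm_cocompact_atTop
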